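/- For a positive integer d, define s(d) as the number of positive integers e < d such that e divides d and e+1 divides d+1. If d = 2^r - 1, then s(d) = τ(r) - 1, where τ(r) is the number of divisors of r. -/

import Mathlib

/-- `sCount d` is the number of positive integers `e < d` with `e ∣ d` and
`(e+1) ∣ (d+1)`. -/
def sCount (d : ℕ) : ℕ :=
  ((Finset.range d).filter fun e => 0 < e ∧ e ∣ d ∧ (e + 1) ∣ (d + 1)).card

lemma mers_dvd (t : ℕ) (ht : 0 < t) : ∀ r : ℕ, ((2 ^ t - 1) ∣ (2 ^ r - 1) ↔ t ∣ r) := by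
  intro r
  induction r using Nat.strong_induction_on with
  | _ r ih =>
    have h1r : (1:ℕ) ≤ 2 ^ r := Nat.one_le_two_pow
    have h1t : (1:ℕ) ≤ 2 ^ t := Nat.one_le_two_pow
    rcases lt_or_ge r t with h | h
    · constructor
      · intro hd
        have hlt : 2 ^ r < 2 ^ t := Nat.pow_lt_pow_right (by norm_num) h
        have : 2 ^ r - 1 = 0 := Nat.eq_zero_of_dvd_of_lt hd (by omega)
        have hr0 : r = 0 := by
          by_contra hr0
          have : (2:ℕ) ^ 1 ≤ 2 ^ r := Nat.pow_le_pow_right (by norm_num) (by omega)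
          omega
        simp [hr0]
      · intro hd
        have hr0 : r = 0 := by
          rcases Nat.eq_zero_or_pos r with h0 | h0
          · exact h0
          · exact absurd (Nat.le_of_dvd h0 hd) (by omega)
        simp [hr0]
    · have h1rt : (1:ℕ) ≤ 2 ^ (r - t) := Nat.one_le_two_pow
      have hmul : 2 ^ (r - t) * 2 ^ t = 2 ^ r := by
        rw [← pow_add]; congr 1; omega
      have key : 2 ^ r - 1 = 2 ^ (r - t) * (2 ^ t - 1) + (2 ^ (r - t) - 1) := by
        have hle : 2 ^ (r - t) ≤ 2 ^ r := Nat.pow_le_pow_right (by norm_num) (by omega)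
        have : 2 ^ (r - t) * (2 ^ t - 1) = 2 ^ r - 2 ^ (r - t) := by
          rw [Nat.mul_sub, hmul, Nat.mul_one]
        rw [this]; omega
      rw [key, Nat.dvd_add_right ⟨2 ^ (r - t), (Nat.mul_comm _ _)⟩,
        ih (r - t) (by omega)]
      constructor
      · intro hd
        have : t ∣ (r - t) + t := Nat.dvd_add hd dvd_rfl
        simpa [Nat.sub_add_cancel h] using this
      · intro hd
        exact Nat.dvd_sub hd dvd_rfl

/-- If `d = 2^r - 1`, then `s(d) = τ(r) - 1`, where `τ(r)` is the number of
divisors of `r`. -/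
theorem sCount_two_pow_sub_one (r : ℕ) (hr : 0 < r) :
    sCount (2 ^ r - 1) = r.divisors.card - 1 := by
  have h1r : (1:ℕ) ≤ 2 ^ r := Nat.one_le_two_pow
  have key : sCount (2 ^ r - 1) = (r.divisors.erase r).card := by
    unfold sCount
    refine (Finset.card_bij (fun t _ => 2 ^ t - 1) ?_ ?_ ?_).symm
    · intro t htm
      rw [Finset.mem_erase, Nat.mem_divisors] at htm
      obtain ⟨hne, htr, -⟩ := htm
      have ht0 : 0 < t := by
        rcases Nat.eq_zero_or_pos t with h0 | h0
        · subst h0; exact absurd (Nat.eq_zero_of_zero_dvd htr) (by omega)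
        · exact h0
      have hlt : t < r := lt_of_le_of_ne (Nat.le_of_dvd hr htr) hne
      have h1t : (1:ℕ) ≤ 2 ^ t := Nat.one_le_two_pow
      have h2t : (2:ℕ) ≤ 2 ^ t := by
        calc (2:ℕ) = 2 ^ 1 := by norm_num
        _ ≤ 2 ^ t := Nat.pow_le_pow_right (by norm_num) ht0
      have hplt : (2:ℕ) ^ t < 2 ^ r := Nat.pow_lt_pow_right (by norm_num) hlt
      show 2 ^ t - 1 ∈ _
      refine Finset.mem_filter.2 ⟨Finset.mem_range.2 (by omega), by omega,
        (mers_dvd t ht0 r).2 htr, ?_⟩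
      have e1 : 2 ^ t - 1 + 1 = 2 ^ t := by omega
      have e2 : 2 ^ r - 1 + 1 = 2 ^ r := by omega
      rw [e1, e2]
      exact pow_dvd_pow 2 hlt.le
    · intro a _ b _ hab
      try simp only at hab
      have ha : (1:ℕ) ≤ 2 ^ a := Nat.one_le_two_pow
      have hb : (1:ℕ) ≤ 2 ^ b := Nat.one_le_two_pow
      have : (2:ℕ) ^ a = 2 ^ b := by omega
      exact Nat.pow_right_injective (by norm_num) this
    · intro e hem
      rw [Finset.mem_filter, Finset.mem_range] at hem
      obtain ⟨hlt, he0, hed, hed1⟩ := hem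
      have e2 : 2 ^ r - 1 + 1 = 2 ^ r := by omega
      rw [e2] at hed1
      obtain ⟨t, htr, hte⟩ := (Nat.dvd_prime_pow Nat.prime_two).1 hed1
      have ht0 : 0 < t := by
        rcases Nat.eq_zero_or_pos t with h0 | h0
        · subst h0; simp at hte; omega
        · exact h0
      have h1t : (1:ℕ) ≤ 2 ^ t := Nat.one_le_two_pow
      have he : e = 2 ^ t - 1 := by omega
      have htdvd : t ∣ r := (mers_dvd t ht0 r).1 (he ▸ hed)
      have hner : t ≠ r := by
        intro h; subst h; omega
      exact ⟨t, Finset.mem_erase.2 ⟨hner, Nat.mem_divisors.2 ⟨htdvd, hr.ne'⟩⟩, he.symm⟩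
  rw [key, Finset.card_erase_of_mem (Nat.mem_divisors_self r hr.ne')]
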